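/- Let γ denote the standard Gaussian measure on ℝ, i.e. the measure with density φ(x) = (2π)^{-1/2} e^{−x²/2} with respect to Lebesgue measure. For every c > 0 and every Lebesgue-measurable set A ⊆ ℝ with γ(A) ≥ γ([−c, c]), the Lebesgue measure of A is at least 2c. Hence the symmetric interval [−c, c] is a minimum volume set for the standard Gaussian with area γ([−c,c]). -/

import Mathlib

open MeasureTheory

/-- Symmetric intervals `[−c, c]` are minimum volume sets for the standard Gaussian
measure on ℝ: any measurable set with at least as much Gaussian probability as
`[−c, c]` has Lebesgue measure at least `2c`. -/
theorem gaussian_symmetric_interval_minimum_volume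
    (c : ℝ) (hc : 0 < c) (A : Set ℝ) (hA : MeasurableSet A)
    (hge : (∫ x in Set.Icc (-c) c, (2 * Real.pi) ^ (-(1:ℝ)/2) * Real.exp (-x ^ 2 / 2)) ≤
      ∫ x in A, (2 * Real.pi) ^ (-(1:ℝ)/2) * Real.exp (-x ^ 2 / 2)) :
    ENNReal.ofReal (2 * c) ≤ volume A := by
  by_contra h
  push_neg at h
  set φ : ℝ → ℝ := fun x => (2 * Real.pi) ^ (-(1:ℝ)/2) * Real.exp (-x ^ 2 / 2) with hφ
  set I : Set ℝ := Set.Icc (-c) c with hI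
  have hImeas : MeasurableSet I := measurableSet_Icc
  have hK : (0:ℝ) < (2 * Real.pi) ^ (-(1:ℝ)/2) :=
    Real.rpow_pos_of_pos (by positivity) _
  have hφpos : ∀ x, 0 < φ x := fun x => by
    simp only [hφ]; positivity
  have hint : Integrable φ := by
    have h2 : Integrable (fun x : ℝ => Real.exp (-(1/2) * x ^ 2)) :=
      integrable_exp_neg_mul_sq (by norm_num)
    have h3 := h2.const_mul ((2 * Real.pi) ^ (-(1:ℝ)/2))
    refine h3.congr (Filter.Eventually.of_forall fun x => ?_)
    simp only [hφ]; ring_nf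
  have hvolI : volume I = ENNReal.ofReal (2 * c) := by
    rw [hI, Real.volume_Icc]; ring_nf
  -- volume decompositions
  have h1 : volume (A ∩ I) + volume (A \ I) = volume A := measure_inter_add_diff A hImeas
  have h2 : volume (A ∩ I) + volume (I \ A) = volume I := by
    rw [Set.inter_comm]; exact measure_inter_add_diff I hA
  have hAIfin : volume (A ∩ I) ≠ ⊤ := by
    refine ne_top_of_le_ne_top ?_ (measure_mono Set.inter_subset_right)
    rw [hvolI]; exact ENNReal.ofReal_ne_top
  have hdiffs : volume (A \ I) < volume (I \ A) := by
    have : volume (A ∩ I) + volume (A \ I) < volume (A ∩ I) + volume (I \ A) := by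
      rw [h1, h2, hvolI]; exact h
    exact (ENNReal.add_lt_add_iff_left hAIfin).mp this
  have hAdfin : volume (A \ I) ≠ ⊤ := hdiffs.ne_top
  have hIdfin : volume (I \ A) ≠ ⊤ := by
    refine ne_top_of_le_ne_top ?_ (measure_mono Set.diff_subset)
    rw [hvolI]; exact ENNReal.ofReal_ne_top
  have htR : (volume (A \ I)).toReal < (volume (I \ A)).toReal :=
    (ENNReal.toReal_lt_toReal hAdfin hIdfin).mpr hdiffs
  -- pointwise bounds
  have hub : ∀ x ∈ A \ I, φ x ≤ φ c := by
    rintro x ⟨-, hxI⟩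
    have hx : x < -c ∨ c < x := by
      by_contra hcon
      push_neg at hcon
      exact hxI ⟨hcon.1, hcon.2⟩
    have hsq : c ^ 2 ≤ x ^ 2 := by
      rcases hx with hx | hx <;> nlinarith
    have := Real.exp_le_exp.mpr (by linarith : -x ^ 2 / 2 ≤ -c ^ 2 / 2)
    simp only [hφ]
    exact mul_le_mul_of_nonneg_left this hK.le
  have hlb : ∀ x ∈ I \ A, φ c ≤ φ x := by
    rintro x ⟨hxI, -⟩
    obtain ⟨h1', h2'⟩ := hxI
    have hsq : x ^ 2 ≤ c ^ 2 := by nlinarith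
    have := Real.exp_le_exp.mpr (by linarith : -c ^ 2 / 2 ≤ -x ^ 2 / 2)
    simp only [hφ]
    exact mul_le_mul_of_nonneg_left this hK.le
  -- integral estimates
  have hintA : ∫ x in A \ I, φ x ≤ φ c * (volume (A \ I)).toReal := by
    have := setIntegral_mono_on (hint.integrableOn) (integrableOn_const hAdfin)
      (hA.diff hImeas) hub
    simpa [setIntegral_const, mul_comm, Measure.real] using this
  have hintI : φ c * (volume (I \ A)).toReal ≤ ∫ x in I \ A, φ x := by
    have := setIntegral_mono_on (integrableOn_const hIdfin)
      (hint.integrableOn) (hImeas.diff hA) hlb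
    simpa [setIntegral_const, mul_comm, Measure.real] using this
  have hmid : φ c * (volume (A \ I)).toReal < φ c * (volume (I \ A)).toReal :=
    mul_lt_mul_of_pos_left htR (hφpos c)
  have hsplitA : (∫ x in A ∩ I, φ x) + ∫ x in A \ I, φ x = ∫ x in A, φ x :=
    integral_inter_add_diff hImeas hint.integrableOn
  have hsplitI : (∫ x in A ∩ I, φ x) + ∫ x in I \ A, φ x = ∫ x in I, φ x := by
    rw [Set.inter_comm]
    exact integral_inter_add_diff hA hint.integrableOn
  have : (∫ x in A, φ x) < ∫ x in I, φ x := by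
    rw [← hsplitA, ← hsplitI]
    have : (∫ x in A \ I, φ x) < ∫ x in I \ A, φ x :=
      lt_of_le_of_lt hintA (lt_of_lt_of_le hmid hintI)
    linarith
  exact absurd hge (not_le.mpr this)
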